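/- Let (S,d_S,σ) be a compact metric measure space with σ of full support, and let γ ∈ Π(σ,σ) be a self-coupling with zero Gromov–Wasserstein cost, i.e., ∫∫ |d_S(s₁,s₂) − d_S(s₁',s₂')|² dγ(s₁,s₁') dγ(s₂,s₂') = 0. Then there exists a measure-preserving isometry ψ : S → S such that γ = (id,ψ)_#σ. -/
import Mathlib

open MeasureTheory
open scoped ENNReal

noncomputable section

variable {S : Type*} [MetricSpace S] [CompactSpace S] [MeasurableSpace S] [BorelSpace S]

def GWCost (γ : Measure (S × S)) : ℝ≥0∞ :=
  ∫⁻ q, ENNReal.ofReal ((dist q.1.1 q.2.1 - dist q.1.2 q.2.2) ^ 2) ∂(γ.prod γ)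

def IsCoupling (γ : Measure (S × S)) (σ τ : Measure S) : Prop :=
  γ.map Prod.fst = σ ∧ γ.map Prod.snd = τ

theorem stmt_15 (σ : Measure S) [IsProbabilityMeasure σ]
    (hsupp : ∀ U : Set S, IsOpen U → U.Nonempty → 0 < σ U)
    (γ : Measure (S × S)) (hγ : IsCoupling γ σ σ) (hcost : GWCost γ = 0) :
    ∃ ψ : S → S, Measurable ψ ∧ σ.map ψ = σ ∧
      (∀ s s', dist (ψ s) (ψ s') = dist s s') ∧
      γ = σ.map (fun s => (s, ψ s)) := by
  have hγprob : IsProbabilityMeasure γ := by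
    constructor
    have : γ.map Prod.fst Set.univ = γ Set.univ := by
      rw [Measure.map_apply measurable_fst MeasurableSet.univ, Set.preimage_univ]
    rw [← this, hγ.1, measure_univ]
  -- Step 1: cost zero gives a.e. distance preservation
  set E : Set ((S × S) × (S × S)) := {q | dist q.1.1 q.2.1 = dist q.1.2 q.2.2} with hE
  have hcont : Continuous fun q : (S×S)×(S×S) => (dist q.1.1 q.2.1 - dist q.1.2 q.2.2)^2 := by
    fun_prop
  have hmf : Measurable fun q : (S×S)×(S×S) =>
      ENNReal.ofReal ((dist q.1.1 q.2.1 - dist q.1.2 q.2.2)^2) :=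
    hcont.measurable.ennreal_ofReal
  have hae : (γ.prod γ) Eᶜ = 0 := by
    have h0 := (lintegral_eq_zero_iff hmf).1 hcost
    have haeE : ∀ᵐ q ∂(γ.prod γ), q ∈ E := by
      filter_upwards [h0] with q hq
      have h1 : (dist q.1.1 q.2.1 - dist q.1.2 q.2.2)^2 ≤ 0 := by
        simpa [ENNReal.ofReal_eq_zero] using hq
      have h2 : (dist q.1.1 q.2.1 - dist q.1.2 q.2.2)^2 = 0 :=
        le_antisymm h1 (sq_nonneg _)
      have := pow_eq_zero_iff (n := 2) (by norm_num) |>.1 h2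
      exact sub_eq_zero.1 this
    simpa [Set.compl_def] using ae_iff.1 haeE
  -- the "support" set
  set K : Set (S × S) := {p | ∀ U ∈ nhds p, 0 < γ U} with hK
  have hKcompl : γ Kᶜ = 0 := by
    apply measure_null_of_locally_null
    intro x hx
    simp only [hK, Set.mem_compl_iff, Set.mem_setOf_eq, not_forall] at hx
    obtain ⟨U, hU, hU0⟩ := hx
    exact ⟨U, mem_nhdsWithin_of_mem_nhds hU, by simpa using hU0⟩
  -- on K × K, distances are preserved
  have hdist : ∀ p ∈ K, ∀ q ∈ K, dist p.1 q.1 = dist p.2 q.2 := by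
    intro p hp q hq
    by_contra hne
    have hopen : IsOpen Eᶜ :=
      (isClosed_eq (by fun_prop) (by fun_prop)).isOpen_compl
    have hmem : (p, q) ∈ Eᶜ := hne
    obtain ⟨u, hu, v, hv, huv⟩ := mem_nhds_prod_iff.1 (hopen.mem_nhds hmem)
    have hpos : 0 < (γ.prod γ) (u ×ˢ v) := by
      rw [Measure.prod_prod]
      exact ENNReal.mul_pos (hp u hu).ne' (hq v hv).ne'
    have : (γ.prod γ) (u ×ˢ v) = 0 :=
      measure_mono_null huv hae
    exact hpos.ne' this
  -- K is closed, hence compact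
  have hKclosed : IsClosed K := by
    rw [← isOpen_compl_iff]
    rw [isOpen_iff_mem_nhds]
    intro x hx
    simp only [hK, Set.mem_compl_iff, Set.mem_setOf_eq, not_forall] at hx
    obtain ⟨U, hU, hU0⟩ := hx
    have hU0' : γ U = 0 := by simpa using hU0
    refine Filter.mem_of_superset (interior_mem_nhds.2 hU) fun y hy => ?_
    simp only [hK, Set.mem_compl_iff, Set.mem_setOf_eq, not_forall]
    exact ⟨interior U, isOpen_interior.mem_nhds hy,
      by simp [measure_mono_null interior_subset hU0']⟩
  -- uniqueness of second coordinate on K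
  have huniq : ∀ s a b, (s, a) ∈ K → (s, b) ∈ K → a = b := by
    intro s a b ha hb
    have := hdist _ ha _ hb
    simp only [dist_self] at this
    exact dist_eq_zero.1 this.symm
  -- existence: every s has a partner in K
  have hex : ∀ s : S, ∃ t, (s, t) ∈ K := by
    intro s
    by_contra hno
    push_neg at hno
    have hKcomp : IsCompact K := hKclosed.isCompact
    have himg : IsCompact (Prod.fst '' K) := hKcomp.image continuous_fst
    have hclosed : IsClosed (Prod.fst '' K) := himg.isClosed
    have hsU : s ∈ (Prod.fst '' K)ᶜ := by
      rintro ⟨⟨a, b⟩, hab, rfl⟩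
      exact hno b hab
    have hpos : 0 < σ (Prod.fst '' K)ᶜ :=
      hsupp _ hclosed.isOpen_compl ⟨s, hsU⟩
    have h0 : σ (Prod.fst '' K)ᶜ = 0 := by
      rw [← hγ.1, Measure.map_apply measurable_fst hclosed.isOpen_compl.measurableSet]
      refine measure_mono_null ?_ hKcompl
      rintro ⟨a, b⟩ hab hKab
      exact hab ⟨(a, b), hKab, rfl⟩
    exact hpos.ne' h0
  choose ψ hψK using hex
  have hiso : ∀ s s', dist (ψ s) (ψ s') = dist s s' := by
    intro s s'
    exact (hdist _ (hψK s) _ (hψK s')).symm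
  have hψc : Continuous ψ := (Isometry.of_dist_eq hiso).continuous
  have hψm : Measurable ψ := hψc.measurable
  have hgm : Measurable fun s : S => (s, ψ s) := measurable_id.prodMk hψm
  -- γ = σ.map (id, ψ)
  have haeid : (fun x : S × S => (x.1, ψ x.1)) =ᵐ[γ] id := by
    have hKae : ∀ᵐ x ∂γ, x ∈ K := by
      rw [ae_iff]
      simpa [Set.compl_def] using hKcompl
    filter_upwards [hKae] with x hx
    have : x.2 = ψ x.1 := huniq x.1 x.2 (ψ x.1) hx (hψK x.1)
    simp [id, ← this]
  have hγeq : γ = σ.map fun s => (s, ψ s) := by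
    calc γ = γ.map id := (Measure.map_id).symm
    _ = γ.map (fun x : S × S => (x.1, ψ x.1)) := (Measure.map_congr haeid).symm
    _ = (γ.map Prod.fst).map (fun s => (s, ψ s)) := by
        rw [Measure.map_map hgm measurable_fst]
        rfl
    _ = σ.map fun s => (s, ψ s) := by rw [hγ.1]
  have hmapψ : σ.map ψ = σ := by
    have : σ.map ψ = ((σ.map fun s => (s, ψ s)).map Prod.snd) := by
      rw [Measure.map_map measurable_snd hgm]
      rfl
    rw [this, ← hγeq, hγ.2]
  exact ⟨ψ, hψm, hmapψ, hiso, hγeq⟩
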